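/- If the updates are bounded by decreasing step sizes, delayed iterates converge to the auxiliary iterate: suppose ‖U_q^t‖ ≤ η_t G for all q, t, where η_t → 0 is decreasing and G ≥ 0, and W^c, W_p^c are defined as sums of updates with delays bounded by s (0 ≤ (c-1) - τ_p^q(c) ≤ s). Then ‖W^c - W_p^c‖ ≤ P·s·η_{c-s}·G, and hence lim_{c→∞} max_p ‖W^c - W_p^c‖ = 0. -/

import Mathlib

open Filter

/-- With updates bounded by decreasing step sizes, delayed local iterates
converge to the auxiliary iterate: `‖W^c - W_p^c‖ ≤ P·s·η_{c-s}·G` and the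
maximal disagreement tends to `0`. -/
theorem stmt12 {n P : ℕ} (hP : 0 < P)
    (U : Fin P → ℕ → EuclideanSpace ℝ (Fin n))
    (W0 : EuclideanSpace ℝ (Fin n)) (τ : Fin P → Fin P → ℕ → ℕ)
    (s : ℕ) (η : ℕ → ℝ) (G : ℝ) (hG : 0 ≤ G) (hη : ∀ t, 0 ≤ η t)
    (hdec : Antitone η) (hη0 : Tendsto η atTop (nhds 0))
    (hU : ∀ q t, ‖U q t‖ ≤ η t * G)
    (hτ : ∀ p q c, s < c → τ p q c ≤ c - 1 ∧ (c - 1) - τ p q c ≤ s) :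
    (∀ c, s < c → ∀ p : Fin P,
      ‖(W0 + ∑ q, ∑ t ∈ Finset.range c, U q t) -
          (W0 + ∑ q, ∑ t ∈ Finset.range (τ p q c + 1), U q t)‖ ≤
        P * s * η (c - s) * G) ∧
    Tendsto
      (fun c : ℕ =>
        Finset.univ.sup' (Finset.univ_nonempty_iff.mpr ⟨⟨0, hP⟩⟩)
          (fun p : Fin P =>
            ‖(W0 + ∑ q, ∑ t ∈ Finset.range c, U q t) -
              (W0 + ∑ q, ∑ t ∈ Finset.range (τ p q c + 1), U q t)‖))
      atTop (nhds 0) := by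
  have key : ∀ c, s < c → ∀ p : Fin P,
      ‖(W0 + ∑ q, ∑ t ∈ Finset.range c, U q t) -
          (W0 + ∑ q, ∑ t ∈ Finset.range (τ p q c + 1), U q t)‖ ≤
        P * s * η (c - s) * G := by
    intro c hc p
    have h1 : (W0 + ∑ q, ∑ t ∈ Finset.range c, U q t) -
        (W0 + ∑ q, ∑ t ∈ Finset.range (τ p q c + 1), U q t)
        = ∑ q, ∑ t ∈ Finset.Ico (τ p q c + 1) c, U q t := by
      rw [add_sub_add_left_eq_sub, ← Finset.sum_sub_distrib]
      refine Finset.sum_congr rfl fun q _ => ?_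
      rw [Finset.sum_Ico_eq_sub _ (by have := (hτ p q c hc).1; omega)]
    rw [h1]
    calc ‖∑ q, ∑ t ∈ Finset.Ico (τ p q c + 1) c, U q t‖
        ≤ ∑ q, ‖∑ t ∈ Finset.Ico (τ p q c + 1) c, U q t‖ := norm_sum_le _ _
      _ ≤ ∑ _q : Fin P, ((s : ℝ) * (η (c - s) * G)) := by
          refine Finset.sum_le_sum fun q _ => ?_
          calc ‖∑ t ∈ Finset.Ico (τ p q c + 1) c, U q t‖
              ≤ ∑ t ∈ Finset.Ico (τ p q c + 1) c, ‖U q t‖ := norm_sum_le _ _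
            _ ≤ ∑ _t ∈ Finset.Ico (τ p q c + 1) c, η (c - s) * G := by
                refine Finset.sum_le_sum fun t ht => ?_
                have ht' := Finset.mem_Ico.mp ht
                refine (hU q t).trans (mul_le_mul_of_nonneg_right ?_ hG)
                exact hdec (by have := (hτ p q c hc).2; omega)
            _ = ((Finset.Ico (τ p q c + 1) c).card : ℝ) * (η (c - s) * G) := by
                rw [Finset.sum_const, nsmul_eq_mul]
            _ ≤ (s : ℝ) * (η (c - s) * G) := by
                apply mul_le_mul_of_nonneg_right _ (mul_nonneg (hη _) hG)
                have h2 := (hτ p q c hc).2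
                have : (Finset.Ico (τ p q c + 1) c).card ≤ s := by
                  rw [Nat.card_Ico]; omega
                exact_mod_cast this
      _ = P * s * η (c - s) * G := by
          rw [Finset.sum_const, Finset.card_univ, Fintype.card_fin, nsmul_eq_mul]
          ring
  refine ⟨key, ?_⟩
  have hbound : Tendsto (fun c : ℕ => (P : ℝ) * s * η (c - s) * G) atTop (nhds 0) := by
    have h1 : Tendsto (fun c : ℕ => η (c - s)) atTop (nhds 0) :=
      hη0.comp (tendsto_sub_atTop_nat s)
    have h2 := h1.const_mul ((P : ℝ) * s)
    simpa [mul_assoc] using h2.mul_const G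
  refine tendsto_of_tendsto_of_tendsto_of_le_of_le' tendsto_const_nhds hbound ?_ ?_
  · filter_upwards with c
    have h := Finset.le_sup' (fun p : Fin P =>
        ‖(W0 + ∑ q, ∑ t ∈ Finset.range c, U q t) -
          (W0 + ∑ q, ∑ t ∈ Finset.range (τ p q c + 1), U q t)‖)
      (Finset.mem_univ (⟨0, hP⟩ : Fin P))
    exact le_trans (norm_nonneg _) h
  · filter_upwards [eventually_gt_atTop s] with c hc
    exact Finset.sup'_le _ _ fun p _ => key c hc p
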